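/- Let α > 0 and g ∈ C²(ℝ). On the half-plane D := {(ρ, m) ∈ ℝ² : ρ > 0} define η_g(ρ, m) := (1/(2√α)) ∫_{−√α}^{√α} ρ · g(m/ρ + ξρ) dξ. Then η_g is convex on D (as a function of the two variables (ρ, m) jointly) if and only if g is convex on ℝ. -/

import Mathlib

open MeasureTheory intervalIntegral Filter Set

private lemma eta_closed (g : ℝ → ℝ) (hgc : Continuous g) {s : ℝ} (hs : 0 < s)
    {ρ m : ℝ} (hρ : 0 < ρ) :
    (∫ ξ in (-s)..s, ρ * g (m / ρ + ξ * ρ)) =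
      (∫ t in (0:ℝ)..(m / ρ + s * ρ), g t) - ∫ t in (0:ℝ)..(m / ρ - s * ρ), g t := by
  rw [intervalIntegral.integral_const_mul]
  have h1 : ∀ ξ : ℝ, m / ρ + ξ * ρ = ρ * ξ + m / ρ := fun ξ => by ring
  simp only [h1]
  rw [intervalIntegral.integral_comp_mul_add g hρ.ne' (m / ρ)]
  rw [intervalIntegral.integral_interval_sub_left (hgc.intervalIntegrable _ _)
    (hgc.intervalIntegrable _ _)]
  rw [smul_eq_mul, ← mul_assoc, mul_inv_cancel₀ hρ.ne', one_mul]
  have e1 : ρ * -s + m / ρ = m / ρ - s * ρ := by ring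
  have e2 : ρ * s + m / ρ = m / ρ + s * ρ := by ring
  rw [e1, e2]

private lemma G_hasDeriv (g : ℝ → ℝ) (hgc : Continuous g) (x : ℝ) :
    HasDerivAt (fun y => ∫ t in (0:ℝ)..y, g t) (g x) x :=
  intervalIntegral.integral_hasDerivAt_right (hgc.intervalIntegrable _ _)
    (hgc.stronglyMeasurableAtFilter _ _) hgc.continuousAt

private lemma arith_key (s r0 c d A B Ga Gb I : ℝ) (hs : 0 < s) (hr : 0 < r0)
    (hAB : A ≤ B) (hI1 : 2 * s * r0 * A ≤ I) (hI2 : I ≤ 2 * s * r0 * B)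
    (hGI : Gb - Ga = I) :
    0 ≤ (1 / (2 * s)) * ((B * (c / r0 ^ 2 + s * d)) * (c / r0 ^ 2 + s * d) +
      Gb * (-(2 * c * d) / r0 ^ 3) -
      ((A * (c / r0 ^ 2 - s * d)) * (c / r0 ^ 2 - s * d) + Ga * (-(2 * c * d) / r0 ^ 3))) := by
  set P : ℝ := c / r0 ^ 2 with hP
  set Q : ℝ := s * d with hQ
  have hsr : 0 < s * r0 := mul_pos hs hr
  have he : (-(2 * c * d) / r0 ^ 3) * (s * r0) = -2 * P * Q := by
    rw [hP, hQ]; field_simp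
  have key : 0 ≤ (s * r0) * ((B * (P + Q)) * (P + Q) + Gb * (-(2 * c * d) / r0 ^ 3) -
      ((A * (P - Q)) * (P - Q) + Ga * (-(2 * c * d) / r0 ^ 3))) := by
    have hexp : (s * r0) * ((B * (P + Q)) * (P + Q) + Gb * (-(2 * c * d) / r0 ^ 3) -
        ((A * (P - Q)) * (P - Q) + Ga * (-(2 * c * d) / r0 ^ 3)))
        = (s * r0) * (B * (P + Q) ^ 2 - A * (P - Q) ^ 2) + I * (-2 * P * Q) := by
      rw [← hGI, ← he]; ring
    rw [hexp]
    rcases le_or_gt 0 (P * Q) with hPQ | hPQ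
    · nlinarith [mul_nonneg (mul_nonneg hsr.le (sub_nonneg.2 hAB)) (sq_nonneg (P - Q)),
        mul_nonneg hPQ (sub_nonneg.2 hI2)]
    · nlinarith [mul_nonneg (mul_nonneg hsr.le (sub_nonneg.2 hAB)) (sq_nonneg (P + Q)),
        mul_nonneg (neg_nonneg.mpr hPQ.le) (sub_nonneg.2 hI1)]
  have h2 : 0 ≤ (B * (P + Q)) * (P + Q) + Gb * (-(2 * c * d) / r0 ^ 3) -
      ((A * (P - Q)) * (P - Q) + Ga * (-(2 * c * d) / r0 ^ 3)) :=
    (mul_nonneg_iff_of_pos_left hsr).mp key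
  have h3 : (0:ℝ) ≤ 1 / (2 * s) := by positivity
  exact mul_nonneg h3 h2

private lemma sym_slope_tendsto (g G : ℝ → ℝ) (hG : ∀ x, HasDerivAt G (g x) x)
    {s : ℝ} (hs : 0 < s) (u : ℝ) :
    Tendsto (fun ρ : ℝ => (1 / ρ) * ((1 / (2 * s)) * (G (u + s * ρ) - G (u - s * ρ))))
      (nhdsWithin 0 (Set.Ioi 0)) (nhds (g u)) := by
  have T1 : Tendsto (fun h : ℝ => h⁻¹ * (G (u + h) - G u)) (nhdsWithin 0 (Set.Ioi 0))
      (nhds (g u)) := (hG u).tendsto_slope_zero_right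
  have hneg : Tendsto (fun h : ℝ => -h) (nhdsWithin 0 (Set.Ioi 0))
      (nhdsWithin 0 (Set.Iio 0)) := by
    refine tendsto_nhdsWithin_iff.mpr ⟨?_, ?_⟩
    · have := (continuous_neg (G := ℝ)).tendsto (0 : ℝ)
      simpa using this.mono_left nhdsWithin_le_nhds
    · exact eventually_mem_nhdsWithin.mono fun h hh => by
        simpa using (neg_neg_iff_pos.mpr hh : -h < 0)
  have T2 : Tendsto (fun h : ℝ => (-h)⁻¹ * (G (u + -h) - G u)) (nhdsWithin 0 (Set.Ioi 0))
      (nhds (g u)) := ((hG u).tendsto_slope_zero_left).comp hneg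
  have T : Tendsto (fun h : ℝ => (G (u + h) - G (u - h)) / (2 * h))
      (nhdsWithin 0 (Set.Ioi 0)) (nhds (g u)) := by
    have := ((T1.add T2).div_const 2)
    have hgu : (g u + g u) / 2 = g u := by ring
    rw [hgu] at this
    refine this.congr' ?_
    filter_upwards [eventually_mem_nhdsWithin] with h hh
    have hh0 : (h:ℝ) ≠ 0 := ne_of_gt hh
    rw [show u + -h = u - h from by ring, inv_neg]
    have e1 : h⁻¹ * (G (u + h) - G u) + -h⁻¹ * (G (u - h) - G u)
        = h⁻¹ * (G (u + h) - G (u - h)) := by ring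
    rw [e1, inv_mul_eq_div, div_div, mul_comm h 2]
  have hcomp : Tendsto (fun ρ : ℝ => s * ρ) (nhdsWithin 0 (Set.Ioi 0))
      (nhdsWithin 0 (Set.Ioi 0)) := by
    refine tendsto_nhdsWithin_iff.mpr ⟨?_, ?_⟩
    · have h0 : Tendsto (fun ρ : ℝ => s * ρ) (nhds 0) (nhds (s * 0)) :=
        (continuous_mul_left s).tendsto 0
      simpa using h0.mono_left nhdsWithin_le_nhds
    · exact eventually_mem_nhdsWithin.mono fun ρ hρ => mul_pos hs hρ
  refine (T.comp hcomp).congr' ?_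
  filter_upwards [eventually_mem_nhdsWithin] with ρ hρ
  have hρ0 : (ρ:ℝ) ≠ 0 := ne_of_gt hρ
  have hgen : ∀ X : ℝ, X / (2 * (s * ρ)) = (1 / ρ) * ((1 / (2 * s)) * X) := by
    intro X
    ring
  exact hgen _

/-- The kinetic entropy `η_g(ρ,m) = (1/(2√α)) ∫_{-√α}^{√α} ρ g(m/ρ + ξρ) dξ` is jointly
convex in `(ρ, m)` on the half plane `{ρ > 0}` if and only if `g` is convex on `ℝ`. -/
theorem stmt14 (α : ℝ) (hα : 0 < α) (g : ℝ → ℝ) (hg : ContDiff ℝ 2 g) :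
    ConvexOn ℝ {p : ℝ × ℝ | 0 < p.1}
      (fun p : ℝ × ℝ => (1 / (2 * Real.sqrt α)) *
        ∫ ξ in (-(Real.sqrt α))..(Real.sqrt α), p.1 * g (p.2 / p.1 + ξ * p.1)) ↔
    ConvexOn ℝ Set.univ g := by
  set s : ℝ := Real.sqrt α with hsdef
  have hs : 0 < s := Real.sqrt_pos.mpr hα
  have hgc : Continuous g := hg.continuous
  have hdiff : Differentiable ℝ g := hg.differentiable (by norm_num)
  have hd : ∀ x, HasDerivAt g (deriv g x) x := fun x => (hdiff x).hasDerivAt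
  set G : ℝ → ℝ := fun y => ∫ t in (0:ℝ)..y, g t with hGdef
  have hG : ∀ x, HasDerivAt G (g x) x := G_hasDeriv g hgc
  have hDconv : Convex ℝ {p : ℝ × ℝ | 0 < p.1} := by
    intro p hp q hq a b ha hb hab
    simp only [Set.mem_setOf_eq, Prod.fst_add, Prod.smul_fst, smul_eq_mul] at *
    rcases eq_or_lt_of_le ha with rfl | ha'
    · have hb1 : b = 1 := by linarith
      simpa [hb1] using hq
    · nlinarith [mul_pos ha' hp, mul_nonneg hb hq.le]
  constructor
  · -- convexity of η implies convexity of g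
    intro hconv
    refine ⟨convex_univ, ?_⟩
    intro u0 _ u1 _ t1 t2 ht1 ht2 hadd
    simp only [smul_eq_mul]
    have key : ∀ ρ : ℝ, ρ ∈ Set.Ioi (0:ℝ) →
        (1/ρ) * ((1/(2*s)) * (G (t1*u0+t2*u1 + s*ρ) - G (t1*u0+t2*u1 - s*ρ)))
          ≤ t1 * ((1/ρ) * ((1/(2*s)) * (G (u0 + s*ρ) - G (u0 - s*ρ))))
            + t2 * ((1/ρ) * ((1/(2*s)) * (G (u1 + s*ρ) - G (u1 - s*ρ)))) := by
      intro ρ hρ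
      have hρ' : (0:ℝ) < ρ := hρ
      have h0 : ((ρ, ρ*u0) : ℝ × ℝ) ∈ {p : ℝ × ℝ | 0 < p.1} := hρ'
      have h1 : ((ρ, ρ*u1) : ℝ × ℝ) ∈ {p : ℝ × ℝ | 0 < p.1} := hρ'
      have hpt : t1 • ((ρ, ρ*u0) : ℝ × ℝ) + t2 • ((ρ, ρ*u1) : ℝ × ℝ)
          = ((ρ, ρ*(t1*u0+t2*u1)) : ℝ × ℝ) := by
        refine Prod.ext ?_ ?_
        · simp only [Prod.fst_add, Prod.smul_fst, smul_eq_mul]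
          linear_combination ρ * hadd
        · simp only [Prod.snd_add, Prod.smul_snd, smul_eq_mul]
          ring
      have hc := hconv.2 h0 h1 ht1 ht2 hadd
      rw [hpt] at hc
      have hval : ∀ u : ℝ, (1 / (2*s)) *
          (∫ ξ in (-s)..s, (((ρ, ρ*u):ℝ×ℝ).1) * g (((ρ, ρ*u):ℝ×ℝ).2 / ((ρ, ρ*u):ℝ×ℝ).1 + ξ * ((ρ, ρ*u):ℝ×ℝ).1))
          = (1/(2*s)) * (G (u + s*ρ) - G (u - s*ρ)) := by
        intro u
        have hcan : ρ * u / ρ = u := by field_simp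
        simp only
        rw [eta_closed g hgc hs hρ', hcan]
      simp only [smul_eq_mul] at hc
      rw [hval (t1*u0+t2*u1), hval u0, hval u1] at hc
      have h1ρ : (0:ℝ) ≤ 1/ρ := by positivity
      have := mul_le_mul_of_nonneg_left hc h1ρ
      nlinarith [this]
    have Tm := sym_slope_tendsto g G hG hs (t1*u0+t2*u1)
    have T0 := (sym_slope_tendsto g G hG hs u0).const_mul t1
    have T1' := (sym_slope_tendsto g G hG hs u1).const_mul t2
    have Tr := T0.add T1'
    exact le_of_tendsto_of_tendsto Tm Tr (eventually_mem_nhdsWithin.mono key)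
  · -- convexity of g implies convexity of η
    intro hcg
    have hmono : Monotone (deriv g) := by
      have := hcg.monotoneOn_deriv (fun x _ => hdiff x)
      exact monotoneOn_univ.mp this
    have hg'c : Continuous (deriv g) := hg.continuous_deriv (by norm_num)
    -- convexity of the closed form
    have hclosed : ConvexOn ℝ {p : ℝ × ℝ | 0 < p.1}
        (fun p : ℝ × ℝ => (1/(2*s)) * (G (p.2/p.1 + s*p.1) - G (p.2/p.1 - s*p.1))) := by
      refine ⟨hDconv, ?_⟩
      intro x hx y hy t1 t2 ht1 ht2 hadd
      have hx1 : 0 < x.1 := hx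
      have hy1 : 0 < y.1 := hy
      set Δρ : ℝ := y.1 - x.1 with hΔρ
      set Δm : ℝ := y.2 - x.2 with hΔm
      set c : ℝ := Δm * x.1 - x.2 * Δρ with hc
      set r : ℝ → ℝ := fun t => x.1 + t * Δρ with hr
      set mm : ℝ → ℝ := fun t => x.2 + t * Δm with hmm
      set φ : ℝ → ℝ := fun t => (1/(2*s)) * (G (mm t / r t + s * r t) - G (mm t / r t - s * r t))
        with hφ
      set ψ : ℝ → ℝ := fun t => (1/(2*s)) * (g (mm t / r t + s * r t) * (c/(r t)^2 + s*Δρ)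
        - g (mm t / r t - s * r t) * (c/(r t)^2 - s*Δρ)) with hψ
      clear_value Δρ Δm c r mm φ ψ
      have hrpos : ∀ t ∈ Set.Icc (0:ℝ) 1, 0 < r t := by
        intro t ht
        simp only [hr, hΔρ]
        rcases lt_or_eq_of_le ht.2 with h | h
        · nlinarith [mul_pos (by linarith : (0:ℝ) < 1 - t) hx1, mul_nonneg ht.1 hy1.le]
        · rw [h]; nlinarith [hy1]
      -- derivative facts
      have hrD : ∀ t : ℝ, HasDerivAt r Δρ t := by
        intro t
        rw [hr]
        simpa using (hasDerivAt_mul_const Δρ (x := t)).const_add x.1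
      have hmD : ∀ t : ℝ, HasDerivAt mm Δm t := by
        intro t
        rw [hmm]
        simpa using (hasDerivAt_mul_const Δm (x := t)).const_add x.2
      have huD : ∀ t : ℝ, 0 < r t → HasDerivAt (fun t => mm t / r t) (c / (r t)^2) t := by
        intro t hrt
        have := (hmD t).div (hrD t) hrt.ne'
        have heq : (Δm * r t - mm t * Δρ) / (r t)^2 = c / (r t)^2 := by
          have : Δm * r t - mm t * Δρ = c := by simp only [hr, hmm, hc]; ring
          rw [this]
        rwa [heq] at this
      have hbD : ∀ t : ℝ, 0 < r t →
          HasDerivAt (fun t => mm t / r t + s * r t) (c / (r t)^2 + s * Δρ) t := by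
        intro t hrt
        exact (huD t hrt).add ((hrD t).const_mul s)
      have haD : ∀ t : ℝ, 0 < r t →
          HasDerivAt (fun t => mm t / r t - s * r t) (c / (r t)^2 - s * Δρ) t := by
        intro t hrt
        exact (huD t hrt).sub ((hrD t).const_mul s)
      have hφD : ∀ t : ℝ, 0 < r t → HasDerivAt φ (ψ t) t := by
        intro t hrt
        have h1 := (hG _).comp t (hbD t hrt)
        have h2 := (hG _).comp t (haD t hrt)
        simp only [hφ, hψ]
        exact ((h1.sub h2).const_mul (1/(2*s)))
      -- second derivative
      set ψ' : ℝ → ℝ := fun t => (1/(2*s)) *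
        ((deriv g (mm t / r t + s * r t) * (c/(r t)^2 + s*Δρ)) * (c/(r t)^2 + s*Δρ)
          + g (mm t / r t + s * r t) * (-(2*c*Δρ) / (r t)^3)
          - ((deriv g (mm t / r t - s * r t) * (c/(r t)^2 - s*Δρ)) * (c/(r t)^2 - s*Δρ)
          + g (mm t / r t - s * r t) * (-(2*c*Δρ) / (r t)^3))) with hψ'
      clear_value ψ'
      have hPD : ∀ t : ℝ, 0 < r t →
          HasDerivAt (fun t => c / (r t)^2 + s*Δρ) (-(2*c*Δρ) / (r t)^3) t := by
        intro t hrt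
        have hr2 : HasDerivAt (fun t => (r t)^2) (2 * r t ^ 1 * Δρ) t := by
          simpa [Function.comp_def] using (hasDerivAt_pow 2 (r t)).comp t (hrD t)
        have := (hasDerivAt_const t c).div hr2 (by positivity)
        have heq : (0 * r t ^ 2 - c * (2 * r t ^ 1 * Δρ)) / ((r t)^2)^2
            = -(2*c*Δρ) / (r t)^3 := by
          rw [div_eq_div_iff (by positivity) (by positivity)]
          ring
        rw [heq] at this
        exact this.add_const (s*Δρ)
      have hQD : ∀ t : ℝ, 0 < r t →
          HasDerivAt (fun t => c / (r t)^2 - s*Δρ) (-(2*c*Δρ) / (r t)^3) t := by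
        intro t hrt
        have h := hPD t hrt
        have : (fun t => c / (r t)^2 - s*Δρ) = fun t => (c / (r t)^2 + s*Δρ) - 2*(s*Δρ) := by
          funext t; ring
        rw [this]
        exact h.sub_const _
      have hψD : ∀ t : ℝ, 0 < r t → HasDerivAt ψ (ψ' t) t := by
        intro t hrt
        have hgb : HasDerivAt (fun t => g (mm t / r t + s * r t))
            (deriv g (mm t / r t + s * r t) * (c/(r t)^2 + s*Δρ)) t :=
          (hd _).comp t (hbD t hrt)
        have hga : HasDerivAt (fun t => g (mm t / r t - s * r t))
            (deriv g (mm t / r t - s * r t) * (c/(r t)^2 - s*Δρ)) t :=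
          (hd _).comp t (haD t hrt)
        have h1 := hgb.mul (hPD t hrt)
        have h2 := hga.mul (hQD t hrt)
        simp only [hψ, hψ']
        exact ((h1.sub h2).const_mul (1/(2*s)))
      have hψ'nonneg : ∀ t : ℝ, 0 < r t → 0 ≤ ψ' t := by
        intro t hrt
        have hab : mm t / r t - s * r t ≤ mm t / r t + s * r t := by
          have hsr : 0 < s * r t := mul_pos hs hrt
          linarith
        have hI : g (mm t / r t + s * r t) - g (mm t / r t - s * r t)
            = ∫ v in (mm t / r t - s * r t)..(mm t / r t + s * r t), deriv g v :=
          intervalIntegral.integral_eq_sub_of_hasDerivAt (fun v _ => hd v)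
            (hg'c.intervalIntegrable _ _) |>.symm
        have hlow : ((mm t / r t + s * r t) - (mm t / r t - s * r t)) *
            deriv g (mm t / r t - s * r t)
            ≤ ∫ v in (mm t / r t - s * r t)..(mm t / r t + s * r t), deriv g v := by
          have := intervalIntegral.integral_mono_on (μ := volume) hab
            (intervalIntegrable_const) (hg'c.intervalIntegrable _ _)
            (fun v hv => hmono hv.1)
          simpa [smul_eq_mul, mul_comm] using this
        have hhigh : (∫ v in (mm t / r t - s * r t)..(mm t / r t + s * r t), deriv g v)
            ≤ ((mm t / r t + s * r t) - (mm t / r t - s * r t)) *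
              deriv g (mm t / r t + s * r t) := by
          have := intervalIntegral.integral_mono_on (μ := volume) hab
            (hg'c.intervalIntegrable _ _) (intervalIntegrable_const)
            (fun v hv => hmono hv.2)
          simpa [smul_eq_mul, mul_comm] using this
        have hlen : (mm t / r t + s * r t) - (mm t / r t - s * r t) = 2 * s * r t := by ring
        rw [hlen] at hlow hhigh
        simp only [hψ']
        exact arith_key s (r t) c Δρ (deriv g (mm t / r t - s * r t))
          (deriv g (mm t / r t + s * r t)) (g (mm t / r t - s * r t))
          (g (mm t / r t + s * r t)) _ hs hrt (hmono hab) hlow hhigh hI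
      -- ψ is monotone on Icc 0 1
      have hmonoψ : MonotoneOn ψ (Set.Icc (0:ℝ) 1) := by
        refine monotoneOn_of_hasDerivWithinAt_nonneg (f' := ψ') (convex_Icc 0 1) ?_ ?_ ?_
        · intro t ht
          exact ((hψD t (hrpos t ht)).continuousAt).continuousWithinAt
        · intro t ht
          rw [interior_Icc] at ht
          exact (hψD t (hrpos t (Set.Ioo_subset_Icc_self ht))).hasDerivWithinAt
        · intro t ht
          rw [interior_Icc] at ht
          exact hψ'nonneg t (hrpos t (Set.Ioo_subset_Icc_self ht))
      -- φ is convex on Icc 0 1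
      have hconvφ : ConvexOn ℝ (Set.Icc (0:ℝ) 1) φ := by
        refine MonotoneOn.convexOn_of_deriv (convex_Icc 0 1) ?_ ?_ ?_
        · intro t ht
          exact ((hφD t (hrpos t ht)).continuousAt).continuousWithinAt
        · intro t ht
          rw [interior_Icc] at ht
          exact ((hφD t (hrpos t (Set.Ioo_subset_Icc_self ht))).differentiableAt).differentiableWithinAt
        · rw [interior_Icc]
          intro t1' ht1' t2' ht2' hle
          rw [(hφD t1' (hrpos t1' (Set.Ioo_subset_Icc_self ht1'))).deriv,
            (hφD t2' (hrpos t2' (Set.Ioo_subset_Icc_self ht2'))).deriv]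
          exact hmonoψ (Set.Ioo_subset_Icc_self ht1') (Set.Ioo_subset_Icc_self ht2') hle
      have h0m : (0:ℝ) ∈ Set.Icc (0:ℝ) 1 := by constructor <;> norm_num
      have h1m : (1:ℝ) ∈ Set.Icc (0:ℝ) 1 := by constructor <;> norm_num
      have hineq := hconvφ.2 h0m h1m ht1 ht2 hadd
      simp only [smul_eq_mul, mul_zero, mul_one, zero_add] at hineq
      have ht1' : t1 = 1 - t2 := by linarith
      have hcomb : (t1 • x + t2 • y : ℝ × ℝ) = (r t2, mm t2) := by
        refine Prod.ext ?_ ?_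
        · simp only [Prod.fst_add, Prod.smul_fst, smul_eq_mul, hr]
          rw [ht1', hΔρ]; ring
        · simp only [Prod.snd_add, Prod.smul_snd, smul_eq_mul, hmm]
          rw [ht1', hΔm]; ring
      have hx' : φ 0 = (1/(2*s)) * (G (x.2/x.1 + s*x.1) - G (x.2/x.1 - s*x.1)) := by
        simp only [hφ, hr, hmm]; norm_num
      have hy' : φ 1 = (1/(2*s)) * (G (y.2/y.1 + s*y.1) - G (y.2/y.1 - s*y.1)) := by
        simp only [hφ, hr, hmm]
        have e1 : x.1 + 1 * Δρ = y.1 := by rw [hΔρ]; ring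
        have e2 : x.2 + 1 * Δm = y.2 := by rw [hΔm]; ring
        rw [e1, e2]
      have hmain : (1/(2*s)) * (G ((t1 • x + t2 • y).2/(t1 • x + t2 • y).1 + s*(t1 • x + t2 • y).1)
          - G ((t1 • x + t2 • y).2/(t1 • x + t2 • y).1 - s*(t1 • x + t2 • y).1)) = φ t2 := by
        rw [hcomb, hφ]
      have hgoal := hineq
      rw [← hmain, hx', hy'] at hgoal
      simpa only [smul_eq_mul] using hgoal
    -- transfer to the original function
    refine ⟨hDconv, ?_⟩
    intro x hx y hy t1 t2 ht1 ht2 hadd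
    have hx1 : 0 < x.1 := hx
    have hy1 : 0 < y.1 := hy
    have hmem : (t1 • x + t2 • y : ℝ × ℝ) ∈ {p : ℝ × ℝ | 0 < p.1} :=
      hDconv hx hy ht1 ht2 hadd
    have heq : ∀ p : ℝ × ℝ, 0 < p.1 →
        (1 / (2 * s)) * (∫ ξ in (-s)..s, p.1 * g (p.2 / p.1 + ξ * p.1))
          = (1/(2*s)) * (G (p.2/p.1 + s*p.1) - G (p.2/p.1 - s*p.1)) := by
      intro p hp
      rw [eta_closed g hgc hs hp]
    have hcl := hclosed.2 hx hy ht1 ht2 hadd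
    simp only [smul_eq_mul] at hcl ⊢
    rw [heq _ hmem, heq _ hx1, heq _ hy1]
    exact hcl
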